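/- Let a = (a_{ij}^{αβ}) be a tensor satisfying the symmetries a_{ij}^{αβ} = a_{ji}^{βα} and a_{ij}^{αβ} = a_{αj}^{iβ}, and the coercivity a_{ij}^{αβ} ξ_i^α ξ_j^β ≥ κ₁|ξ|² for all symmetric matrices ξ, with κ₁ > 0. Define ã_{ij}^{αβ} = a_{ij}^{αβ} + μ δ_{iα} δ_{jβ} − μ δ_{iβ} δ_{jα} with μ = κ₁/4. Then ã satisfies the Legendre (very strong ellipticity) condition: ã_{ij}^{αβ} ξ_i^α ξ_j^β ≥ μ |ξ|² for every d×d matrix ξ. -/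
import Mathlib

open Matrix

lemma sum4_13 {d : ℕ} (f : Fin d → Fin d → Fin d → Fin d → ℝ) :
    ∑ i, ∑ j, ∑ α, ∑ β, f i j α β = ∑ i, ∑ j, ∑ α, ∑ β, f α j i β := by
  calc ∑ i, ∑ j, ∑ α, ∑ β, f i j α β
      = ∑ i, ∑ α, ∑ j, ∑ β, f i j α β :=
        Finset.sum_congr rfl fun i _ => Finset.sum_comm
    _ = ∑ i, ∑ α, ∑ j, ∑ β, f α j i β := Finset.sum_comm
    _ = ∑ i, ∑ j, ∑ α, ∑ β, f α j i β :=
        Finset.sum_congr rfl fun i _ => Finset.sum_comm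

lemma sum4_24 {d : ℕ} (f : Fin d → Fin d → Fin d → Fin d → ℝ) :
    ∑ i, ∑ j, ∑ α, ∑ β, f i j α β = ∑ i, ∑ j, ∑ α, ∑ β, f i β α j := by
  calc ∑ i, ∑ j, ∑ α, ∑ β, f i j α β
      = ∑ i, ∑ α, ∑ j, ∑ β, f i j α β :=
        Finset.sum_congr rfl fun i _ => Finset.sum_comm
    _ = ∑ i, ∑ α, ∑ j, ∑ β, f i β α j :=
        Finset.sum_congr rfl fun i _ => Finset.sum_congr rfl fun α _ => Finset.sum_comm
    _ = ∑ i, ∑ j, ∑ α, ∑ β, f i β α j :=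
        Finset.sum_congr rfl fun i _ => Finset.sum_comm


lemma double_ite_sum {d : ℕ} (i j : Fin d) (g : Fin d → Fin d → ℝ) :
    (∑ α, ∑ β, (if i = α then (1:ℝ) else 0) * (if j = β then (1:ℝ) else 0) * g α β) = g i j := by
  rw [Finset.sum_eq_single i]
  · rw [Finset.sum_eq_single j]
    · simp
    · intro b _ hb; simp [Ne.symm hb]
    · intro h; exact absurd (Finset.mem_univ j) h
  · intro b _ hb; simp [Ne.symm hb]
  · intro h; exact absurd (Finset.mem_univ i) h

theorem stmt2 (d : ℕ) (κ₁ : ℝ) (hκ : 0 < κ₁)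
    (a : Fin d → Fin d → Fin d → Fin d → ℝ)
    (hsym1 : ∀ i j α β, a i j α β = a j i β α)
    (hsym2 : ∀ i j α β, a i j α β = a α j i β)
    (hcoer : ∀ ξ : Matrix (Fin d) (Fin d) ℝ, ξ.IsSymm →
      κ₁ * ∑ i, ∑ α, (ξ i α) ^ 2 ≤ ∑ i, ∑ j, ∑ α, ∑ β, a i j α β * ξ i α * ξ j β) :
    ∀ ξ : Matrix (Fin d) (Fin d) ℝ,
      (κ₁ / 4) * ∑ i, ∑ α, (ξ i α) ^ 2 ≤
        ∑ i, ∑ j, ∑ α, ∑ β,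
          (a i j α β
            + (κ₁ / 4) * (if i = α then (1:ℝ) else 0) * (if j = β then (1:ℝ) else 0)
            - (κ₁ / 4) * (if i = β then (1:ℝ) else 0) * (if j = α then (1:ℝ) else 0))
          * ξ i α * ξ j β := by
  intro ξ
  -- symmetry of a in (j,β)
  have hsym3 : ∀ i j α β, a i j α β = a i β α j := by
    intro i j α β
    rw [hsym1, hsym2, hsym1]
  -- symmetrized matrix
  set σ : Matrix (Fin d) (Fin d) ℝ := Matrix.of (fun i α => (ξ i α + ξ α i) / 2) with hσdef
  have hσ : ∀ i α, σ i α = (ξ i α + ξ α i) / 2 := fun i α => rfl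
  have hσsymm : σ.IsSymm := by
    unfold Matrix.IsSymm
    ext i j
    simp [hσ, Matrix.transpose_apply]
    ring
  -- step 1: replace ξ by its symmetrization in the first slot
  have e1 : ∑ i, ∑ j, ∑ α, ∑ β, a i j α β * ξ i α * ξ j β
      = ∑ i, ∑ j, ∑ α, ∑ β, a i j α β * ξ α i * ξ j β := by
    rw [sum4_13 (fun i j α β => a i j α β * ξ i α * ξ j β)]
    exact Finset.sum_congr rfl fun i _ => Finset.sum_congr rfl fun j _ =>
      Finset.sum_congr rfl fun α _ => Finset.sum_congr rfl fun β _ => by rw [← hsym2]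
  have e2 : ∑ i, ∑ j, ∑ α, ∑ β, a i j α β * σ i α * ξ j β
      = ∑ i, ∑ j, ∑ α, ∑ β, a i j α β * ξ i α * ξ j β := by
    have pt : ∀ i j α β, a i j α β * σ i α * ξ j β
        = (a i j α β * ξ i α * ξ j β) / 2 + (a i j α β * ξ α i * ξ j β) / 2 := by
      intro i j α β; rw [hσ]; ring
    simp_rw [pt, Finset.sum_add_distrib, ← Finset.sum_div]
    rw [← e1]
    ring
  -- step 2: second slot
  have e3 : ∑ i, ∑ j, ∑ α, ∑ β, a i j α β * σ i α * ξ j β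
      = ∑ i, ∑ j, ∑ α, ∑ β, a i j α β * σ i α * ξ β j := by
    rw [sum4_24 (fun i j α β => a i j α β * σ i α * ξ j β)]
    exact Finset.sum_congr rfl fun i _ => Finset.sum_congr rfl fun j _ =>
      Finset.sum_congr rfl fun α _ => Finset.sum_congr rfl fun β _ => by rw [← hsym3]
  have e4 : ∑ i, ∑ j, ∑ α, ∑ β, a i j α β * σ i α * σ j β
      = ∑ i, ∑ j, ∑ α, ∑ β, a i j α β * σ i α * ξ j β := by
    have pt : ∀ i j α β, a i j α β * σ i α * σ j β
        = (a i j α β * σ i α * ξ j β) / 2 + (a i j α β * σ i α * ξ β j) / 2 := by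
      intro i j α β; rw [hσ j β]; ring
    simp_rw [pt, Finset.sum_add_distrib, ← Finset.sum_div]
    rw [← e3]
    ring
  have h1 : ∑ i, ∑ j, ∑ α, ∑ β, a i j α β * ξ i α * ξ j β
      = ∑ i, ∑ j, ∑ α, ∑ β, a i j α β * σ i α * σ j β := by
    rw [e4, e2]
  -- delta sums
  have h2 : ∑ i, ∑ j, ∑ α, ∑ β,
      (κ₁ / 4) * (if i = α then (1:ℝ) else 0) * (if j = β then (1:ℝ) else 0) * ξ i α * ξ j β
      = (κ₁ / 4) * (∑ i, ξ i i) ^ 2 := by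
    have pt : ∀ (i j α β : Fin d),
        (κ₁ / 4) * (if i = α then (1:ℝ) else 0) * (if j = β then (1:ℝ) else 0) * ξ i α * ξ j β
        = (if i = α then (1:ℝ) else 0) * (if j = β then (1:ℝ) else 0)
            * ((κ₁ / 4) * ξ i α * ξ j β) := by
      intros; ring
    simp_rw [pt, double_ite_sum]
    rw [sq, Finset.sum_mul_sum, Finset.mul_sum]
    refine Finset.sum_congr rfl fun i _ => ?_
    rw [Finset.mul_sum]
    exact Finset.sum_congr rfl fun j _ => by ring
  have h3 : ∑ i, ∑ j, ∑ α, ∑ β,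
      (κ₁ / 4) * (if i = β then (1:ℝ) else 0) * (if j = α then (1:ℝ) else 0) * ξ i α * ξ j β
      = (κ₁ / 4) * ∑ i, ∑ j, ξ i j * ξ j i := by
    have pt : ∀ (i j α β : Fin d),
        (κ₁ / 4) * (if i = β then (1:ℝ) else 0) * (if j = α then (1:ℝ) else 0) * ξ i α * ξ j β
        = (if j = α then (1:ℝ) else 0) * (if i = β then (1:ℝ) else 0)
            * ((κ₁ / 4) * ξ i α * ξ j β) := by
      intros; ring
    simp_rw [pt, double_ite_sum]
    rw [Finset.mul_sum]
    refine Finset.sum_congr rfl fun i _ => ?_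
    rw [Finset.mul_sum]
    exact Finset.sum_congr rfl fun j _ => by ring
  -- norm identity
  have hswapsq : ∑ i, ∑ j, (ξ j i) ^ 2 = ∑ i, ∑ j, (ξ i j) ^ 2 := Finset.sum_comm
  have h4 : ∑ i, ∑ j, ξ i j * ξ j i
      = 2 * (∑ i, ∑ α, (σ i α) ^ 2) - ∑ i, ∑ α, (ξ i α) ^ 2 := by
    have pt : ∀ i j, 2 * (σ i j) ^ 2 = (ξ i j) ^ 2 / 2 + (ξ j i) ^ 2 / 2 + ξ i j * ξ j i := by
      intro i j; rw [hσ]; ring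
    have : ∑ i, ∑ j, (2 * (σ i j) ^ 2)
        = ∑ i, ∑ j, ((ξ i j) ^ 2 / 2 + (ξ j i) ^ 2 / 2 + ξ i j * ξ j i) := by
      simp_rw [pt]
    simp_rw [Finset.sum_add_distrib, ← Finset.sum_div, ← Finset.mul_sum] at this
    rw [hswapsq] at this
    linarith
  -- split the goal
  have split : ∑ i, ∑ j, ∑ α, ∑ β,
      (a i j α β
        + (κ₁ / 4) * (if i = α then (1:ℝ) else 0) * (if j = β then (1:ℝ) else 0)
        - (κ₁ / 4) * (if i = β then (1:ℝ) else 0) * (if j = α then (1:ℝ) else 0))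
      * ξ i α * ξ j β
      = (∑ i, ∑ j, ∑ α, ∑ β, a i j α β * ξ i α * ξ j β)
        + (∑ i, ∑ j, ∑ α, ∑ β,
          (κ₁ / 4) * (if i = α then (1:ℝ) else 0) * (if j = β then (1:ℝ) else 0) * ξ i α * ξ j β)
        - (∑ i, ∑ j, ∑ α, ∑ β,
          (κ₁ / 4) * (if i = β then (1:ℝ) else 0) * (if j = α then (1:ℝ) else 0) * ξ i α * ξ j β) := by
    have pt : ∀ (i j α β : Fin d),
        (a i j α β
          + (κ₁ / 4) * (if i = α then (1:ℝ) else 0) * (if j = β then (1:ℝ) else 0)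
          - (κ₁ / 4) * (if i = β then (1:ℝ) else 0) * (if j = α then (1:ℝ) else 0))
        * ξ i α * ξ j β
        = a i j α β * ξ i α * ξ j β
          + (κ₁ / 4) * (if i = α then (1:ℝ) else 0) * (if j = β then (1:ℝ) else 0) * ξ i α * ξ j β
          - (κ₁ / 4) * (if i = β then (1:ℝ) else 0) * (if j = α then (1:ℝ) else 0) * ξ i α * ξ j β := by
      intros; ring
    simp only [pt, Finset.sum_add_distrib, Finset.sum_sub_distrib]
  rw [split, h1, h2, h3, h4]
  have hc := hcoer σ hσsymm
  have hσ2 : (0:ℝ) ≤ ∑ i, ∑ α, (σ i α) ^ 2 :=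
    Finset.sum_nonneg fun i _ => Finset.sum_nonneg fun α _ => sq_nonneg _
  have htr : (0:ℝ) ≤ (∑ i, ξ i i) ^ 2 := sq_nonneg _
  nlinarith [mul_nonneg hκ.le hσ2]
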